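/- (Riemann) Suppose the trigonometric series a_0/2 + \sum_{k=1}^\infty (a_k cos kx + b_k sin kx) converges at every real x to f(x), and let F(x) = (a_0/4) x^2 - \sum_{k=1}^\infty (a_k cos kx + b_k sin kx)/k^2 be the sum of the twice formally integrated series. Then at every real x the Schwarz (second symmetric) derivative of F exists and equals f(x): lim_{h \to 0} (F(x+h) + F(x-h) - 2F(x))/h^2 = f(x). -/

import Mathlib

open Filter Topology Finset Real

noncomputable def rsdPhi (t : ℝ) : ℝ := (Real.sin t / t) ^ 2

lemma rsd_q_bound {t : ℝ} (ht : 0 ≤ t) : |Real.sin t - t * Real.cos t| ≤ t ^ 2 / 2 := by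
  have hderiv : ∀ s ∈ Set.uIcc (0:ℝ) t,
      HasDerivAt (fun s => Real.sin s - s * Real.cos s) (s * Real.sin s) s := by
    intro s _
    have h1 : HasDerivAt (fun s : ℝ => s * Real.cos s) (Real.cos s + s * (-Real.sin s)) s := by
      simpa using (hasDerivAt_id s).fun_mul (Real.hasDerivAt_cos s)
    have := (Real.hasDerivAt_sin s).fun_sub h1
    exact this.congr_deriv (by ring)
  have hint : IntervalIntegrable (fun s : ℝ => s * Real.sin s) MeasureTheory.volume 0 t :=
    (continuous_id.mul Real.continuous_sin).intervalIntegrable 0 t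
  have heq := intervalIntegral.integral_eq_sub_of_hasDerivAt hderiv hint
  simp only [Real.sin_zero, Real.cos_zero, mul_zero, zero_mul, sub_zero, mul_one] at heq
  rw [← heq]
  calc |∫ s in (0:ℝ)..t, s * Real.sin s| ≤ ∫ s in (0:ℝ)..t, |s * Real.sin s| := by
        exact intervalIntegral.abs_integral_le_integral_abs ht
    _ ≤ ∫ s in (0:ℝ)..t, s := by
        apply intervalIntegral.integral_mono_on ht
        · exact (continuous_id.mul Real.continuous_sin).abs.intervalIntegrable 0 t
        · exact intervalIntegral.intervalIntegrable_id
        · intro s hs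
          rw [abs_mul]
          have h1 : |Real.sin s| ≤ 1 := Real.abs_sin_le_one s
          have h2 : |s| = s := abs_of_nonneg hs.1
          nlinarith [abs_nonneg s]
    _ = t ^ 2 / 2 := by simp [integral_id]

lemma rsd_phi_hasDeriv {t : ℝ} (ht : t ≠ 0) :
    HasDerivAt rsdPhi (2 * (Real.sin t / t) * ((Real.cos t * t - Real.sin t) / t ^ 2)) t := by
  have h1 : HasDerivAt (fun s : ℝ => Real.sin s / s) ((Real.cos t * t - Real.sin t * 1) / t ^ 2) t :=
    (Real.hasDerivAt_sin t).div (hasDerivAt_id t) ht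
  have := h1.fun_pow 2
  simp only [Nat.cast_ofNat, pow_one] at this
  refine this.congr_deriv ?_
  norm_num

lemma rsd_phi_deriv_bound {t : ℝ} (ht : 0 < t) :
    |2 * (Real.sin t / t) * ((Real.cos t * t - Real.sin t) / t ^ 2)| ≤ 1 := by
  have h1 : |Real.sin t| ≤ |t| := abs_sin_le_abs
  have h2 : |Real.sin t - t * Real.cos t| ≤ t ^ 2 / 2 := rsd_q_bound ht.le
  rw [abs_mul, abs_mul, abs_div, abs_div]
  have ht' : |t| = t := abs_of_pos ht
  have ht2 : |t ^ 2| = t ^ 2 := abs_of_pos (by positivity)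
  have h3 : |Real.cos t * t - Real.sin t| = |Real.sin t - t * Real.cos t| := by
    rw [← abs_neg]; ring_nf
  rw [ht', ht2, h3, abs_two]  -- |2| = 2?
  have hsin : |Real.sin t| / t ≤ 1 := by
    rw [div_le_one ht]; simpa [ht'] using h1
  calc 2 * (|Real.sin t| / t) * (|Real.sin t - t * Real.cos t| / t ^ 2)
      ≤ 2 * 1 * ((t ^ 2 / 2) / t ^ 2) := by
        gcongr
    _ = 1 := by field_simp

lemma rsd_phi_deriv_bound2 {t : ℝ} (ht : 1 ≤ t) :
    |2 * (Real.sin t / t) * ((Real.cos t * t - Real.sin t) / t ^ 2)| ≤ 4 / t ^ 2 := by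
  have ht0 : (0:ℝ) < t := lt_of_lt_of_le one_pos ht
  have h1 : |Real.sin t| ≤ 1 := Real.abs_sin_le_one t
  have hc : |Real.cos t| ≤ 1 := Real.abs_cos_le_one t
  rw [abs_mul, abs_mul, abs_div, abs_div, abs_two, abs_of_pos ht0, abs_of_pos (show (0:ℝ) < t^2 by positivity)]
  have h2 : |Real.cos t * t - Real.sin t| ≤ 2 * t := by
    calc |Real.cos t * t - Real.sin t| ≤ |Real.cos t * t| + |Real.sin t| := abs_sub _ _
      _ ≤ 1 * t + 1 := by rw [abs_mul, abs_of_pos ht0]; gcongr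
      _ ≤ 2 * t := by nlinarith
  have h3 : |Real.sin t| / t ≤ 1 / t := by gcongr
  calc 2 * (|Real.sin t| / t) * (|Real.cos t * t - Real.sin t| / t ^ 2)
      ≤ 2 * (1 / t) * ((2 * t) / t ^ 2) := by gcongr
    _ = 4 / t ^ 2 := by field_simp; ring

lemma rsd_phi_lip {s t : ℝ} (hs : 0 < s) (hst : s ≤ t) : |rsdPhi t - rsdPhi s| ≤ t - s := by
  have := Convex.norm_image_sub_le_of_norm_hasDerivWithin_le
    (f := rsdPhi) (f' := fun u => 2 * (Real.sin u / u) * ((Real.cos u * u - Real.sin u) / u ^ 2))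
    (s := Set.Icc s t) (C := 1)
    (fun u hu => (rsd_phi_hasDeriv (ne_of_gt (lt_of_lt_of_le hs hu.1))).hasDerivWithinAt)
    (fun u hu => by rw [Real.norm_eq_abs]; exact rsd_phi_deriv_bound (lt_of_lt_of_le hs hu.1))
    (convex_Icc s t) (Set.left_mem_Icc.2 hst) (Set.right_mem_Icc.2 hst)
  simpa [abs_of_nonneg (sub_nonneg.2 hst)] using this

lemma rsd_phi_lip_tail {s t : ℝ} (hs : 1 ≤ s) (hst : s ≤ t) :
    |rsdPhi t - rsdPhi s| ≤ (t - s) * (4 / s ^ 2) := by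
  have := Convex.norm_image_sub_le_of_norm_hasDerivWithin_le
    (f := rsdPhi) (f' := fun u => 2 * (Real.sin u / u) * ((Real.cos u * u - Real.sin u) / u ^ 2))
    (s := Set.Icc s t) (C := 4 / s ^ 2)
    (fun u hu => (rsd_phi_hasDeriv (ne_of_gt (lt_of_lt_of_le one_pos (le_trans hs hu.1)))).hasDerivWithinAt)
    (fun u hu => by
      have h1 := rsd_phi_deriv_bound2 (le_trans hs hu.1)
      have h2 : 4 / u ^ 2 ≤ 4 / s ^ 2 := by
        have hu1 : s ≤ u := hu.1
        have : s ^ 2 ≤ u ^ 2 := by nlinarith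
        apply div_le_div_of_nonneg_left (by norm_num) (by nlinarith) this
      rw [Real.norm_eq_abs]; exact h1.trans h2)
    (convex_Icc s t) (Set.left_mem_Icc.2 hst) (Set.right_mem_Icc.2 hst)
  calc |rsdPhi t - rsdPhi s| ≤ 4 / s ^ 2 * |t - s| := by simpa using this
    _ = (t - s) * (4 / s ^ 2) := by rw [abs_of_nonneg (sub_nonneg.2 hst)]; ring

lemma rsd_phi_nonneg (t : ℝ) : 0 ≤ rsdPhi t := sq_nonneg _

lemma rsd_phi_le_one (t : ℝ) : rsdPhi t ≤ 1 := by
  rcases eq_or_ne t 0 with h | h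
  · simp [rsdPhi, h]
  · have h1 : |Real.sin t / t| ≤ 1 := by
      rw [abs_div, div_le_one (abs_pos.2 h)]
      exact abs_sin_le_abs
    calc rsdPhi t = |Real.sin t / t| ^ 2 := (sq_abs _).symm
      _ ≤ 1 := by nlinarith [abs_nonneg (Real.sin t / t)]

lemma rsd_phi_tendsto : Tendsto rsdPhi (𝓝[≠] (0:ℝ)) (𝓝 1) := by
  have h1 : Tendsto (fun t : ℝ => Real.sin t / t) (𝓝[≠] (0:ℝ)) (𝓝 1) := by
    have := hasDerivAt_iff_tendsto_slope.1 (Real.hasDerivAt_sin 0)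
    rw [Real.cos_zero] at this
    refine this.congr' ?_
    filter_upwards [self_mem_nhdsWithin] with t ht
    simp [slope_def_field, div_eq_div_iff]
  have := h1.pow 2
  simp only [one_pow] at this
  exact this

noncomputable def rsdPsi (H : ℝ) (k : ℕ) : ℝ := if k = 0 then 1 else rsdPhi (k * H)

lemma rsd_psi_le_one (H : ℝ) (k : ℕ) : |rsdPsi H k| ≤ 1 := by
  unfold rsdPsi
  split
  · norm_num
  · rw [abs_of_nonneg (rsd_phi_nonneg _)]; exact rsd_phi_le_one _

lemma rsd_delta_H {H : ℝ} (hH : 0 < H) {k : ℕ} (hk : 1 ≤ k) :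
    |rsdPsi H (k+1) - rsdPsi H k| ≤ H := by
  have hk0 : k ≠ 0 := by omega
  have hkR : (1:ℝ) ≤ k := by exact_mod_cast hk
  have h1 : rsdPsi H (k+1) = rsdPhi (((k:ℝ)+1) * H) := by
    have hc : ((k+1 : ℕ) : ℝ) = (k:ℝ)+1 := by push_cast; ring
    simp [rsdPsi, hc]
  have h2 : rsdPsi H k = rsdPhi ((k:ℝ) * H) := by simp [rsdPsi, hk0]
  have hs : (0:ℝ) < (k:ℝ) * H := by nlinarith
  have hst : (k:ℝ) * H ≤ ((k:ℝ)+1) * H := by nlinarith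
  have hlip := rsd_phi_lip hs hst
  rw [h1, h2]
  calc |rsdPhi (((k:ℝ)+1) * H) - rsdPhi ((k:ℝ) * H)| ≤ ((k:ℝ)+1) * H - (k:ℝ) * H := hlip
    _ = H := by ring

lemma rsd_delta_tail {H : ℝ} (hH : 0 < H) {k : ℕ} (hk : 1 ≤ k) :
    |rsdPsi H (k+1) - rsdPsi H k| ≤ 4 / H * ((k:ℝ)^2)⁻¹ := by
  have hk0 : k ≠ 0 := by omega
  have hkR : (1:ℝ) ≤ k := by exact_mod_cast hk
  have hkpos : (0:ℝ) < k := by linarith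
  rcases le_or_gt 1 ((k:ℝ) * H) with hbig | hsmall
  · have h1 : rsdPsi H (k+1) = rsdPhi (((k:ℝ)+1) * H) := by
      have hc : ((k+1 : ℕ) : ℝ) = (k:ℝ)+1 := by push_cast; ring
      simp [rsdPsi, hc]
    have h2 : rsdPsi H k = rsdPhi ((k:ℝ) * H) := by simp [rsdPsi, hk0]
    have hst : (k:ℝ) * H ≤ ((k:ℝ)+1) * H := by nlinarith
    have hlip := rsd_phi_lip_tail hbig hst
    rw [h1, h2]
    have hkH : (0:ℝ) < (k:ℝ) * H := by nlinarith
    calc |rsdPhi (((k:ℝ)+1) * H) - rsdPhi ((k:ℝ) * H)|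
        ≤ (((k:ℝ)+1) * H - (k:ℝ) * H) * (4 / ((k:ℝ) * H) ^ 2) := hlip
      _ = 4 / H * ((k:ℝ)^2)⁻¹ := by field_simp; ring
  · have h := rsd_delta_H hH hk
    refine h.trans ?_
    rw [div_mul_eq_mul_div, le_div_iff₀ (by positivity)]
    have hkH : (0:ℝ) < (k:ℝ) * H := by positivity
    have h2 : (k:ℝ)^2 * H^2 ≤ 1 := by nlinarith [mul_pos hkpos hH]
    have h3 : ((k:ℝ)^2)⁻¹ * (k:ℝ)^2 = 1 := inv_mul_cancel₀ (by positivity)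
    have h4 : (0:ℝ) < ((k:ℝ)^2)⁻¹ := by positivity
    nlinarith [sq_nonneg H]

lemma rsd_var_bound {H : ℝ} (hH : 0 < H) (hH1 : H ≤ 1) (n : ℕ) :
    ∑ k ∈ Finset.range n, |rsdPsi H (k+1) - rsdPsi H k| ≤ 11 := by
  set K := Nat.ceil (1/H) with hK
  have hH1' : (1:ℝ) ≤ 1/H := by rw [le_div_iff₀ hH]; linarith
  have hK1 : 1 ≤ K := by
    rw [hK]; exact_mod_cast Nat.one_le_ceil_iff.2 (by positivity)
  have hKge : 1/H ≤ (K:ℝ) := Nat.le_ceil _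
  have hKlt : (K:ℝ) < 1/H + 1 := Nat.ceil_lt_add_one (by positivity)
  have hbound : ∀ k ∈ Finset.range n, |rsdPsi H (k+1) - rsdPsi H k| ≤
      (if k = 0 then (1:ℝ) else 0) + (if 1 ≤ k ∧ k ≤ K then H else 0)
        + (if K < k then 4/H * ((k:ℝ)^2)⁻¹ else 0) := by
    intro k _
    rcases Nat.eq_zero_or_pos k with rfl | hk
    · have e1 : rsdPsi H (0+1) = rsdPhi H := by
        simp [rsdPsi]
      have e0 : rsdPsi H 0 = 1 := by simp [rsdPsi]
      rw [e1, e0, if_pos rfl, if_neg (show ¬ (1 ≤ 0 ∧ 0 ≤ K) by omega),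
        if_neg (show ¬ K < 0 by omega)]
      have h1 := rsd_phi_le_one H
      have h2 := rsd_phi_nonneg H
      rw [abs_sub_comm, abs_of_nonneg (by linarith)]
      linarith
    · rcases le_or_gt k K with hkK | hKk
      · rw [if_neg (by omega), if_pos ⟨hk, hkK⟩, if_neg (by omega)]
        simpa using rsd_delta_H hH hk
      · rw [if_neg (by omega), if_neg (by omega), if_pos hKk]
        simpa using rsd_delta_tail hH hk
  refine (Finset.sum_le_sum hbound).trans ?_
  rw [Finset.sum_add_distrib, Finset.sum_add_distrib]
  have S1 : (∑ k ∈ Finset.range n, if k = 0 then (1:ℝ) else 0) ≤ 1 := by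
    rw [Finset.sum_ite_eq' (Finset.range n) 0 (fun _ => (1:ℝ))]
    split <;> norm_num
  have S2 : (∑ k ∈ Finset.range n, if 1 ≤ k ∧ k ≤ K then H else 0) ≤ 2 := by
    rw [← Finset.sum_filter]
    have hsub : (Finset.range n).filter (fun k => 1 ≤ k ∧ k ≤ K) ⊆ Finset.Icc 1 K := by
      intro k hkmem
      simp only [Finset.mem_filter] at hkmem
      simp [Finset.mem_Icc]; omega
    calc (∑ _k ∈ (Finset.range n).filter (fun k => 1 ≤ k ∧ k ≤ K), H)
        = ((Finset.range n).filter (fun k => 1 ≤ k ∧ k ≤ K)).card * H := by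
          rw [Finset.sum_const, nsmul_eq_mul]
      _ ≤ (K:ℝ) * H := by
          have hcard : ((Finset.range n).filter (fun k => 1 ≤ k ∧ k ≤ K)).card ≤ K := by
            have := Finset.card_le_card hsub
            simpa [Nat.card_Icc] using this
          have : (((Finset.range n).filter (fun k => 1 ≤ k ∧ k ≤ K)).card : ℝ) ≤ (K:ℝ) := by
            exact_mod_cast hcard
          nlinarith
      _ ≤ (1/H + 1) * H := by nlinarith
      _ = 1 + H := by field_simp
      _ ≤ 2 := by linarith
  have S3 : (∑ k ∈ Finset.range n, if K < k then 4/H * ((k:ℝ)^2)⁻¹ else 0) ≤ 8 := by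
    rw [← Finset.sum_filter]
    have heq : (Finset.range n).filter (fun k => K < k) = Finset.Ioo K n := by
      ext k
      simp [Finset.mem_filter, Finset.mem_range, Finset.mem_Ioo]
      tauto
    rw [heq, ← Finset.mul_sum]
    have h1 : (∑ k ∈ Finset.Ioo K n, ((k:ℝ)^2)⁻¹) ≤ 2 / ((K:ℝ) + 1) :=
      sum_Ioo_inv_sq_le K n
    have h2 : 2 / ((K:ℝ)+1) ≤ 2 * H := by
      rw [div_le_iff₀ (by positivity)]
      have : (1:ℝ) ≤ H * ((K:ℝ)+1) := by
        calc (1:ℝ) = H * (1/H) := by field_simp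
          _ ≤ H * ((K:ℝ)+1) := by nlinarith
      nlinarith
    have h3 : (0:ℝ) ≤ ∑ k ∈ Finset.Ioo K n, ((k:ℝ)^2)⁻¹ :=
      Finset.sum_nonneg fun k _ => by positivity
    calc 4/H * (∑ k ∈ Finset.Ioo K n, ((k:ℝ)^2)⁻¹) ≤ 4/H * (2*H) := by
          have h4 : (0:ℝ) ≤ 4/H := by positivity
          nlinarith
      _ = 8 := by field_simp; ring
  linarith

lemma rsd_abel (u : ℕ → ℝ) (L : ℝ) (ψ : ℕ → ℝ) (hψ0 : ψ 0 = 1) (r : ℕ → ℝ)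
    (hr : ∀ n, r n = L - ∑ k ∈ Finset.Icc 1 n, u k) (n : ℕ) :
    ∑ k ∈ Finset.Icc 1 n, u k * ψ k
      = L - r n * ψ n + ∑ k ∈ Finset.range n, r k * (ψ (k+1) - ψ k) := by
  induction n with
  | zero =>
      simp [hr 0, hψ0]
  | succ n ih =>
      have hu : r n - r (n+1) = u (n+1) := by
        rw [hr n, hr (n+1), Finset.sum_Icc_succ_top (by omega)]
        ring
      rw [Finset.sum_Icc_succ_top (by omega), ih, Finset.sum_range_succ]
      have : u (n+1) = r n - r (n+1) := hu.symm
      rw [this]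
      ring

lemma rsd_phi_comp_tendsto {c : ℝ} (hc : c ≠ 0) :
    Tendsto (fun h : ℝ => rsdPhi (c * (|h| / 2))) (𝓝[≠] (0:ℝ)) (𝓝 1) := by
  apply rsd_phi_tendsto.comp
  rw [tendsto_nhdsWithin_iff]
  constructor
  · have h1 : Tendsto (fun h : ℝ => c * (|h| / 2)) (𝓝 0) (𝓝 (c * (|(0:ℝ)| / 2))) := by
      exact (continuous_const.mul (continuous_abs.div_const 2)).tendsto 0
    simp only [abs_zero, zero_div, mul_zero] at h1
    exact h1.mono_left nhdsWithin_le_nhds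
  · filter_upwards [self_mem_nhdsWithin] with h hh
    have : h ≠ 0 := hh
    simp only [Set.mem_compl_iff, Set.mem_singleton_iff]
    positivity

lemma rsd_delta_tendsto (k : ℕ) :
    Tendsto (fun h : ℝ => rsdPsi (|h|/2) (k+1) - rsdPsi (|h|/2) k) (𝓝[≠] (0:ℝ)) (𝓝 0) := by
  have hsucc : ∀ h : ℝ, rsdPsi (|h|/2) (k+1) = rsdPhi (((k:ℝ)+1) * (|h|/2)) := by
    intro h
    have hc : ((k+1 : ℕ) : ℝ) = (k:ℝ)+1 := by push_cast; ring
    simp [rsdPsi, hc]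
  have h1 : Tendsto (fun h : ℝ => rsdPhi (((k:ℝ)+1) * (|h|/2))) (𝓝[≠] (0:ℝ)) (𝓝 1) :=
    rsd_phi_comp_tendsto (by positivity)
  rcases Nat.eq_zero_or_pos k with rfl | hk
  · have : ∀ h : ℝ, rsdPsi (|h|/2) 0 = 1 := fun h => by simp [rsdPsi]
    simp only [hsucc, this]
    simpa using h1.sub_const 1
  · have hk0 : k ≠ 0 := by omega
    have h2 : Tendsto (fun h : ℝ => rsdPhi ((k:ℝ) * (|h|/2))) (𝓝[≠] (0:ℝ)) (𝓝 1) :=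
      rsd_phi_comp_tendsto (by exact_mod_cast hk0)
    have : ∀ h : ℝ, rsdPsi (|h|/2) k = rsdPhi ((k:ℝ) * (|h|/2)) := fun h => by
      simp [rsdPsi, hk0]
    simp only [hsucc, this]
    simpa using h1.sub h2

lemma rsd_summable_delta {H : ℝ} (hH : 0 < H) :
    Summable (fun k : ℕ => |rsdPsi H (k+1) - rsdPsi H k|) := by
  rw [← summable_nat_add_iff 1]
  have hbase : Summable (fun k : ℕ => 4 / H * (((k:ℝ)+1)^2)⁻¹) := by
    have h0 : Summable (fun k : ℕ => ((k:ℝ)^2)⁻¹) := by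
      have := Real.summable_one_div_nat_pow.2 (show 1 < 2 by norm_num)
      simpa [one_div] using this
    have h1 : Summable (fun k : ℕ => (((k:ℝ)+1)^2)⁻¹) := by
      have := (summable_nat_add_iff 1).2 h0
      simpa [Nat.cast_add] using this
    exact h1.mul_left _
  apply Summable.of_nonneg_of_le (fun k => abs_nonneg _) (fun k => ?_) hbase
  have := rsd_delta_tail hH (show 1 ≤ k+1 by omega)
  simpa [Nat.cast_add] using this

lemma rsd_term (A B x h : ℝ) (hh : h ≠ 0) {k : ℕ} (hk : 1 ≤ k) :
    2 * ((A * Real.cos (k*x) + B * Real.sin (k*x)) / (k:ℝ)^2)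
      - (A * Real.cos (k*(x+h)) + B * Real.sin (k*(x+h))) / (k:ℝ)^2
      - (A * Real.cos (k*(x-h)) + B * Real.sin (k*(x-h))) / (k:ℝ)^2
    = h^2 * ((A * Real.cos (k*x) + B * Real.sin (k*x)) * rsdPsi (|h|/2) k) := by
  have hk0 : k ≠ 0 := by omega
  have hc : ((k:ℝ)) ≠ 0 := by exact_mod_cast hk0
  have hcpos : (0:ℝ) < k := by positivity
  have habs : |h| ≠ 0 := abs_ne_zero.2 hh
  have habs2 : |h|^2 = h^2 := sq_abs h
  have hsin : Real.sin ((k:ℝ) * (|h|/2))^2 = Real.sin ((k:ℝ)*h/2)^2 := by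
    rcases le_or_gt 0 h with h0 | h0
    · rw [abs_of_nonneg h0]; ring_nf
    · rw [abs_of_neg h0]
      have : (k:ℝ) * (-h/2) = -((k:ℝ)*h/2) := by ring
      rw [this, Real.sin_neg]
      ring
  have hcos : Real.cos ((k:ℝ)*h) = 1 - 2 * Real.sin ((k:ℝ)*h/2)^2 := by
    have h2 := Real.sin_sq_add_cos_sq ((k:ℝ)*h/2)
    have h3 := Real.cos_two_mul' ((k:ℝ)*h/2)
    rw [show 2*((k:ℝ)*h/2) = (k:ℝ)*h by ring] at h3
    linarith
  have e1 : (k:ℝ)*(x+h) = (k:ℝ)*x + (k:ℝ)*h := by ring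
  have e2 : (k:ℝ)*(x-h) = (k:ℝ)*x - (k:ℝ)*h := by ring
  rw [e1, e2, Real.cos_add, Real.sin_add, Real.cos_sub, Real.sin_sub]
  have hpsi : rsdPsi (|h|/2) k = Real.sin ((k:ℝ)*h/2)^2 / ((k:ℝ) * (|h|/2))^2 := by
    rw [rsdPsi, if_neg hk0, rsdPhi, div_pow, hsin]
  rw [hpsi, hcos]
  have hden : ((k:ℝ) * (|h|/2))^2 = (k:ℝ)^2 * h^2 / 4 := by
    rw [mul_pow, div_pow, habs2]; ring
  rw [hden]
  field_simp
  ring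
theorem riemann_second_symmetric_derivative (a b : ℕ → ℝ) (f F : ℝ → ℝ)
    (hconv : ∀ x : ℝ, Tendsto
      (fun n : ℕ => a 0 / 2 +
        ∑ k ∈ Finset.Icc 1 n, (a k * Real.cos (k * x) + b k * Real.sin (k * x)))
      atTop (𝓝 (f x)))
    (hF : ∀ x : ℝ, Tendsto
      (fun n : ℕ => a 0 / 4 * x ^ 2 -
        ∑ k ∈ Finset.Icc 1 n, (a k * Real.cos (k * x) + b k * Real.sin (k * x)) / (k : ℝ) ^ 2)
      atTop (𝓝 (F x))) :
    ∀ x : ℝ, Tendsto (fun h : ℝ => (F (x + h) + F (x - h) - 2 * F x) / h ^ 2)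
      (𝓝[≠] 0) (𝓝 (f x)) := by
  intro x
  set u : ℕ → ℝ := fun k => a k * Real.cos (k * x) + b k * Real.sin (k * x) with hu
  set L : ℝ := f x - a 0 / 2 with hLdef
  set r : ℕ → ℝ := fun n => L - ∑ k ∈ Finset.Icc 1 n, u k with hrdef
  have hS : Tendsto (fun n => ∑ k ∈ Finset.Icc 1 n, u k) atTop (𝓝 L) := by
    have h1 := (hconv x).sub_const (a 0 / 2)
    simp only [add_sub_cancel_left] at h1
    exact h1
  have hr0 : Tendsto r atTop (𝓝 0) := by
    have h2 : Tendsto (fun n : ℕ => L - ∑ k ∈ Finset.Icc 1 n, u k) atTop (𝓝 (L - L)) :=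
      tendsto_const_nhds.sub hS
    simpa using h2
  obtain ⟨M, hM⟩ : ∃ M : ℝ, ∀ n, |r n| ≤ M := by
    obtain ⟨M, hM⟩ := hr0.abs.bddAbove_range
    exact ⟨M, fun n => hM (Set.mem_range_self n)⟩
  have key : ∀ h : ℝ, h ≠ 0 →
      Summable (fun k : ℕ => |r k * (rsdPsi (|h|/2) (k+1) - rsdPsi (|h|/2) k)|) ∧
      (F (x + h) + F (x - h) - 2 * F x) / h ^ 2
        = f x + ∑' k : ℕ, r k * (rsdPsi (|h|/2) (k+1) - rsdPsi (|h|/2) k) := by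
    intro h hh
    have hH : 0 < |h|/2 := by positivity
    have hsq : h^2 ≠ 0 := pow_ne_zero 2 hh
    set H := |h|/2 with hHdef
    set Δ : ℕ → ℝ := fun k => rsdPsi H (k+1) - rsdPsi H k with hΔ
    have hsumabs : Summable (fun k => |Δ k|) := rsd_summable_delta hH
    have hsumabs' : Summable (fun k => |r k * Δ k|) := by
      apply Summable.of_nonneg_of_le (fun k => abs_nonneg _) (fun k => ?_) (hsumabs.mul_left M)
      rw [abs_mul]; exact mul_le_mul_of_nonneg_right (hM k) (abs_nonneg _)
    have hsum : Summable (fun k => r k * Δ k) := hsumabs'.of_abs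
    refine ⟨hsumabs', ?_⟩
    set E := ∑' k, r k * Δ k with hE
    set T : ℕ → ℝ := fun n => ∑ k ∈ Finset.Icc 1 n, u k * rsdPsi H k with hT
    have A1 := ((hF (x+h)).add (hF (x-h))).sub ((hF x).const_mul 2)
    have hident : ∀ n : ℕ,
        (a 0 / 4 * (x+h) ^ 2 -
          ∑ k ∈ Finset.Icc 1 n, (a k * Real.cos (k * (x+h)) + b k * Real.sin (k * (x+h))) / (k : ℝ) ^ 2)
        + (a 0 / 4 * (x-h) ^ 2 -
          ∑ k ∈ Finset.Icc 1 n, (a k * Real.cos (k * (x-h)) + b k * Real.sin (k * (x-h))) / (k : ℝ) ^ 2)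
        - 2 * (a 0 / 4 * x ^ 2 -
          ∑ k ∈ Finset.Icc 1 n, (a k * Real.cos (k * x) + b k * Real.sin (k * x)) / (k : ℝ) ^ 2)
        = a 0 / 2 * h^2 + h^2 * T n := by
      intro n
      have e4 : h^2 * T n =
          ∑ k ∈ Finset.Icc 1 n,
            (2 * ((a k * Real.cos (k * x) + b k * Real.sin (k * x)) / (k : ℝ) ^ 2)
              - (a k * Real.cos (k * (x+h)) + b k * Real.sin (k * (x+h))) / (k : ℝ) ^ 2
              - (a k * Real.cos (k * (x-h)) + b k * Real.sin (k * (x-h))) / (k : ℝ) ^ 2) := by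
        rw [hT, Finset.mul_sum]
        refine Finset.sum_congr rfl (fun k hk => ?_)
        exact (rsd_term (a k) (b k) x h hh (Finset.mem_Icc.mp hk).1).symm
      have e5 : ∑ k ∈ Finset.Icc 1 n,
            (2 * ((a k * Real.cos (k * x) + b k * Real.sin (k * x)) / (k : ℝ) ^ 2)
              - (a k * Real.cos (k * (x+h)) + b k * Real.sin (k * (x+h))) / (k : ℝ) ^ 2
              - (a k * Real.cos (k * (x-h)) + b k * Real.sin (k * (x-h))) / (k : ℝ) ^ 2)
          = 2 * ∑ k ∈ Finset.Icc 1 n, (a k * Real.cos (k * x) + b k * Real.sin (k * x)) / (k : ℝ) ^ 2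
            - ∑ k ∈ Finset.Icc 1 n, (a k * Real.cos (k * (x+h)) + b k * Real.sin (k * (x+h))) / (k : ℝ) ^ 2
            - ∑ k ∈ Finset.Icc 1 n, (a k * Real.cos (k * (x-h)) + b k * Real.sin (k * (x-h))) / (k : ℝ) ^ 2 := by
        rw [Finset.sum_sub_distrib, Finset.sum_sub_distrib, Finset.mul_sum]
      rw [e4, e5]
      ring
    have A1' : Tendsto (fun n => a 0 / 2 * h^2 + h^2 * T n) atTop
        (𝓝 (F (x+h) + F (x-h) - 2 * F x)) := A1.congr hident
    have A1'' : Tendsto T atTop (𝓝 ((F (x+h) + F (x-h) - 2 * F x - a 0 / 2 * h^2) / h^2)) := by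
      have := (A1'.sub_const (a 0 / 2 * h^2)).div_const (h^2)
      refine this.congr (fun n => ?_)
      field_simp
      ring
    have habel : ∀ n : ℕ, T n = L - r n * rsdPsi H n + ∑ k ∈ Finset.range n, r k * Δ k := by
      intro n
      exact rsd_abel u L (rsdPsi H) (by simp [rsdPsi]) r (fun m => rfl) n
    have t1 : Tendsto (fun n => r n * rsdPsi H n) atTop (𝓝 0) := by
      apply squeeze_zero_norm (a := fun n => |r n|) (fun n => ?_) (by simpa using hr0.abs)
      rw [Real.norm_eq_abs, abs_mul]
      calc |r n| * |rsdPsi H n| ≤ |r n| * 1 :=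
            mul_le_mul_of_nonneg_left (rsd_psi_le_one H n) (abs_nonneg _)
        _ = |r n| := mul_one _
    have t2 : Tendsto (fun n => ∑ k ∈ Finset.range n, r k * Δ k) atTop (𝓝 E) :=
      hsum.hasSum.tendsto_sum_nat
    have A2 : Tendsto T atTop (𝓝 (L - 0 + E)) := by
      refine Tendsto.congr (fun n => (habel n).symm) ?_
      exact (tendsto_const_nhds.sub t1).add t2
    have huniq := tendsto_nhds_unique A1'' A2
    rw [sub_zero] at huniq
    have : (F (x+h) + F (x-h) - 2 * F x) / h^2 = a 0 / 2 + (L + E) := by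
      field_simp at huniq ⊢
      linarith
    rw [this, hLdef]
    ring
  rw [Metric.tendsto_nhds]
  intro ε hε
  set ε' := ε / 24 with hε'def
  have hε' : 0 < ε' := by positivity
  obtain ⟨N, hN⟩ := Metric.tendsto_atTop.mp hr0 ε' hε'
  have hNr : ∀ k, N ≤ k → |r k| ≤ ε' := by
    intro k hk
    have := hN k hk
    rw [Real.dist_eq, sub_zero] at this
    exact this.le
  have hfin : Tendsto (fun h : ℝ => ∑ k ∈ Finset.range N,
      |r k| * |rsdPsi (|h|/2) (k+1) - rsdPsi (|h|/2) k|) (𝓝[≠] (0:ℝ)) (𝓝 0) := by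
    have := tendsto_finset_sum (Finset.range N)
      (fun k _ => ((rsd_delta_tendsto k).abs.const_mul (|r k|)))
    simpa using this
  have hev1 := hfin.eventually (gt_mem_nhds (show (0:ℝ) < ε/2 by positivity))
  have hev2 : ∀ᶠ h : ℝ in 𝓝[≠] 0, |h| ≤ 2 := by
    have : ∀ᶠ h : ℝ in 𝓝 0, |h| ≤ 2 := by
      have := Metric.ball_mem_nhds (0:ℝ) (show (0:ℝ) < 2 by norm_num)
      filter_upwards [this] with y hy
      rw [Metric.mem_ball, Real.dist_eq, sub_zero] at hy
      exact hy.le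
    exact this.filter_mono nhdsWithin_le_nhds
  filter_upwards [hev1, hev2, self_mem_nhdsWithin] with h hh1 hh2 hh3
  have hh : h ≠ 0 := hh3
  obtain ⟨hsumabs', hkey⟩ := key h hh
  rw [Real.dist_eq, hkey]
  have hH : 0 < |h|/2 := by positivity
  have hH1 : |h|/2 ≤ 1 := by linarith [hh2]
  set H := |h|/2 with hHdef
  set Δ : ℕ → ℝ := fun k => rsdPsi H (k+1) - rsdPsi H k with hΔ
  have hsumabs : Summable (fun k => |Δ k|) := rsd_summable_delta hH
  have htsumΔ : ∑' k, |Δ k| ≤ 11 := by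
    apply hsumabs.tsum_le_of_sum_le
    intro s
    obtain ⟨n, hn⟩ := s.exists_nat_subset_range
    calc ∑ k ∈ s, |Δ k| ≤ ∑ k ∈ Finset.range n, |Δ k| :=
          Finset.sum_le_sum_of_subset_of_nonneg hn (fun k _ _ => abs_nonneg _)
      _ ≤ 11 := rsd_var_bound hH hH1 n
  have hsplit := Summable.sum_add_tsum_compl (s := Finset.range N) hsumabs'
  have hcompl : ∑' (k : ((Finset.range N : Set ℕ)ᶜ : Set ℕ)), |r k * Δ k| ≤ ε' * 11 := by
    have hle : ∀ (k : ((Finset.range N : Set ℕ)ᶜ : Set ℕ)), |r k * Δ k| ≤ ε' * |Δ k| := by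
      rintro ⟨k, hk⟩
      simp only [Set.mem_compl_iff, Finset.coe_range, Set.mem_Iio, not_lt] at hk
      rw [abs_mul]
      exact mul_le_mul_of_nonneg_right (hNr k hk) (abs_nonneg _)
    calc ∑' (k : ((Finset.range N : Set ℕ)ᶜ : Set ℕ)), |r k * Δ k|
        ≤ ∑' (k : ((Finset.range N : Set ℕ)ᶜ : Set ℕ)), ε' * |Δ k| :=
          Summable.tsum_le_tsum hle (hsumabs'.subtype _) ((hsumabs.mul_left ε').subtype _)
      _ = ε' * ∑' (k : ((Finset.range N : Set ℕ)ᶜ : Set ℕ)), |Δ k| := tsum_mul_left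
      _ ≤ ε' * ∑' k, |Δ k| := by
          have h2 := Summable.sum_add_tsum_compl (s := Finset.range N) hsumabs
          have h3 : (0:ℝ) ≤ ∑ k ∈ Finset.range N, |Δ k| :=
            Finset.sum_nonneg fun k _ => abs_nonneg _
          have h4 : ∑' (k : ((Finset.range N : Set ℕ)ᶜ : Set ℕ)), |Δ k| ≤ ∑' k, |Δ k| := by
            linarith
          exact mul_le_mul_of_nonneg_left h4 hε'.le
      _ ≤ ε' * 11 := mul_le_mul_of_nonneg_left htsumΔ hε'.le
  have habsE : |∑' k, r k * Δ k| ≤ ∑' k, |r k * Δ k| := by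
    have hs : Summable (fun k => ‖r k * Δ k‖) := by
      simpa only [Real.norm_eq_abs] using hsumabs'
    have h5 := norm_tsum_le_tsum_norm hs
    simpa only [Real.norm_eq_abs] using h5
  have hfinpart : ∑ k ∈ Finset.range N, |r k * Δ k| < ε / 2 := by
    calc ∑ k ∈ Finset.range N, |r k * Δ k| = ∑ k ∈ Finset.range N, |r k| * |Δ k| := by
          refine Finset.sum_congr rfl (fun k _ => abs_mul _ _)
      _ < ε / 2 := hh1
  calc |f x + ∑' k, r k * Δ k - f x| = |∑' k, r k * Δ k| := by rw [add_sub_cancel_left]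
    _ ≤ ∑' k, |r k * Δ k| := habsE
    _ = ∑ k ∈ Finset.range N, |r k * Δ k|
          + ∑' (k : ((Finset.range N : Set ℕ)ᶜ : Set ℕ)), |r k * Δ k| := hsplit.symm
    _ < ε / 2 + ε' * 11 := by linarith
    _ < ε := by rw [hε'def]; linarith
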